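/- Let K be an algebraically closed field, A, N ∈ End(K^n) with A invertible, N nilpotent, c ∈ K nonzero, and A N A⁻¹ = c·N. Write A = s·u for the Jordan–Chevalley decomposition of A (s semisimple, u unipotent, commuting). Then s N s⁻¹ = c·N and u N u⁻¹ = N, i.e., u commutes with N. -/

import Mathlib

lemma aux_twisted_nilp {K A : Type} [Field K] [Ring A] [Algebra K A]
    (m x : A) (hm : IsNilpotent m) (lam : K) (hlam : lam ≠ 1)
    (h : (1 - lam) • x = lam • (x * m) - m * x) : x = 0 := by
  set T : Module.End K A := lam • LinearMap.mulRight K m - LinearMap.mulLeft K m with hT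
  have hTnil : IsNilpotent T := by
    apply Commute.isNilpotent_sub
    · exact ((LinearMap.commute_mulLeft_right m m).symm).smul_left lam
    · obtain ⟨k, hk⟩ := hm
      exact IsNilpotent.smul ⟨k, by rw [LinearMap.pow_mulRight, hk]; ext y; simp⟩ lam
    · obtain ⟨k, hk⟩ := hm
      exact ⟨k, by rw [LinearMap.pow_mulLeft, hk]; ext y; simp⟩
  have hTx : T x = (1 - lam) • x := by
    simp only [hT, LinearMap.sub_apply, LinearMap.smul_apply, LinearMap.mulRight_apply,
      LinearMap.mulLeft_apply]
    rw [h]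
  have key : ∀ k : ℕ, (1 - lam) ^ k • x = (T ^ k) x := by
    intro k
    induction k with
    | zero => simp
    | succ k ih =>
      rw [pow_succ, mul_smul, pow_succ, Module.End.mul_apply, hTx, LinearMap.map_smul, ← ih]
      exact smul_comm _ _ _
  obtain ⟨k, hk⟩ := hTnil
  have := key k
  rw [hk] at this
  simp only [LinearMap.zero_apply] at this
  have hne : (1 - lam) ^ k ≠ 0 := pow_ne_zero _ (sub_ne_zero.mpr (Ne.symm hlam))
  exact (smul_eq_zero.mp this).resolve_left hne

/-- if `A = s * u` is the multiplicative Jordan–Chevalley decomposition of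
an invertible matrix `A` satisfying `A N A⁻¹ = c • N` with `N` nilpotent and `c ≠ 0`,
then the semisimple part satisfies `s N s⁻¹ = c • N` and the unipotent part commutes
with `N`. -/
theorem jordan_parts_twisted_commutation
    {K : Type} [Field K] [IsAlgClosed K] {n : ℕ}
    (s u : (Matrix (Fin n) (Fin n) K)ˣ) (N : Matrix (Fin n) (Fin n) K) (c : K)
    (hc : c ≠ 0) (hN : IsNilpotent N)
    (hdiag : ∃ P : (Matrix (Fin n) (Fin n) K)ˣ,
      Matrix.IsDiag (((P⁻¹ : (Matrix (Fin n) (Fin n) K)ˣ) : Matrix (Fin n) (Fin n) K)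
        * (s : Matrix (Fin n) (Fin n) K) * (P : Matrix (Fin n) (Fin n) K)))
    (huni : IsNilpotent ((u : Matrix (Fin n) (Fin n) K) - 1))
    (hcomm : Commute (s : Matrix (Fin n) (Fin n) K) (u : Matrix (Fin n) (Fin n) K))
    (hrel : ((s * u : (Matrix (Fin n) (Fin n) K)ˣ) : Matrix (Fin n) (Fin n) K) * N *
        (((s * u)⁻¹ : (Matrix (Fin n) (Fin n) K)ˣ) : Matrix (Fin n) (Fin n) K) = c • N) :
    (s : Matrix (Fin n) (Fin n) K) * N *
        ((s⁻¹ : (Matrix (Fin n) (Fin n) K)ˣ) : Matrix (Fin n) (Fin n) K) = c • N ∧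
    (u : Matrix (Fin n) (Fin n) K) * N = N * (u : Matrix (Fin n) (Fin n) K) := by
  classical
  obtain ⟨P, hP⟩ := hdiag
  -- matrix avatars
  set Pm : Matrix (Fin n) (Fin n) K := (P : Matrix (Fin n) (Fin n) K) with hPm_def
  set Pi : Matrix (Fin n) (Fin n) K := ((P⁻¹ : (Matrix (Fin n) (Fin n) K)ˣ) : Matrix (Fin n) (Fin n) K) with hPi_def
  set sm : Matrix (Fin n) (Fin n) K := (s : Matrix (Fin n) (Fin n) K) with hsm_def
  set si : Matrix (Fin n) (Fin n) K := ((s⁻¹ : (Matrix (Fin n) (Fin n) K)ˣ) : Matrix (Fin n) (Fin n) K) with hsi_def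
  set um : Matrix (Fin n) (Fin n) K := (u : Matrix (Fin n) (Fin n) K) with hum_def
  set ui : Matrix (Fin n) (Fin n) K := ((u⁻¹ : (Matrix (Fin n) (Fin n) K)ˣ) : Matrix (Fin n) (Fin n) K) with hui_def
  have hPmPi : Pm * Pi = 1 := Units.mul_inv P
  have hPiPm : Pi * Pm = 1 := Units.inv_mul P
  have hsmsi : sm * si = 1 := Units.mul_inv s
  have hsism : si * sm = 1 := Units.inv_mul s
  have humui : um * ui = 1 := Units.mul_inv u
  have huium : ui * um = 1 := Units.inv_mul u
  have hcanL : ∀ X : Matrix (Fin n) (Fin n) K, Pm * (Pi * X) = X := fun X => by rw [← mul_assoc, hPmPi, one_mul]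
  have hcanL' : ∀ X : Matrix (Fin n) (Fin n) K, Pi * (Pm * X) = X := fun X => by rw [← mul_assoc, hPiPm, one_mul]
  have hconjmul : ∀ X Y : Matrix (Fin n) (Fin n) K, (Pi * X * Pm) * (Pi * Y * Pm) = Pi * (X * Y) * Pm := by
    intro X Y; simp only [mul_assoc, hcanL]
  have hconj_inj : ∀ X Y : Matrix (Fin n) (Fin n) K, Pi * X * Pm = Pi * Y * Pm → X = Y := by
    intro X Y h
    have := congrArg (fun Z => Pm * Z * Pi) h
    simpa only [mul_assoc, hcanL', hPmPi, mul_one, hcanL] using this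
  -- conjugated objects
  set D : Matrix (Fin n) (Fin n) K := Pi * sm * Pm with hD_def
  set Di : Matrix (Fin n) (Fin n) K := Pi * si * Pm with hDi_def
  set V : Matrix (Fin n) (Fin n) K := Pi * um * Pm with hV_def
  set Vi : Matrix (Fin n) (Fin n) K := Pi * ui * Pm with hVi_def
  set M : Matrix (Fin n) (Fin n) K := Pi * N * Pm with hM_def
  have hViV : Vi * V = 1 := by
    rw [hVi_def, hV_def, hconjmul, huium, mul_one, hPiPm]
  have hDDi : D * Di = 1 := by
    rw [hD_def, hDi_def, hconjmul, hsmsi, mul_one, hPiPm]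
  have hDiD : Di * D = 1 := by
    rw [hD_def, hDi_def, hconjmul, hsism, mul_one, hPiPm]
  -- diagonal structure
  set d : Fin n → K := D.diag with hd_def
  have hDdiag : D = Matrix.diagonal d := hP.diagonal_diag.symm
  have hdne : ∀ i, d i ≠ 0 := by
    intro i
    have hu : IsUnit D.det := by
      have h1 : D.det * Di.det = 1 := by rw [← Matrix.det_mul, hDDi, Matrix.det_one]
      exact isUnit_iff_exists_inv.mpr ⟨_, h1⟩
    have hdet : D.det = ∏ j, d j := by rw [hDdiag, Matrix.det_diagonal]
    rw [hdet] at hu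
    intro hzero
    exact hu.ne_zero (Finset.prod_eq_zero (Finset.mem_univ i) hzero)
  have hDidiag : Di = Matrix.diagonal (fun i => (d i)⁻¹) := by
    have h2 : D * Matrix.diagonal (fun i => (d i)⁻¹) = 1 := by
      rw [hDdiag, Matrix.diagonal_mul_diagonal]
      convert Matrix.diagonal_one using 2
      exact funext fun i => mul_inv_cancel₀ (hdne i)
    calc Di = (Di * D) * Matrix.diagonal (fun i => (d i)⁻¹) := by
          rw [mul_assoc, h2, mul_one]
      _ = Matrix.diagonal (fun i => (d i)⁻¹) := by rw [hDiD, one_mul]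
  -- the conjugated relation
  have harg : sm * (um * N * ui) * si = c • N := by
    have h1 : ((s * u : (Matrix (Fin n) (Fin n) K)ˣ) : Matrix (Fin n) (Fin n) K) = sm * um := Units.val_mul s u
    have h2 : (((s * u)⁻¹ : (Matrix (Fin n) (Fin n) K)ˣ) : Matrix (Fin n) (Fin n) K) = ui * si := by
      rw [mul_inv_rev]; exact Units.val_mul _ _
    calc sm * (um * N * ui) * si = (sm * um) * N * (ui * si) := by simp only [mul_assoc]
      _ = c • N := by rw [← h1, ← h2]; exact hrel
  have hrelM : D * (V * M * Vi) * Di = c • M := by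
    rw [hD_def, hDi_def, hV_def, hVi_def, hM_def]
    simp only [hconjmul]
    rw [harg, mul_smul_comm, smul_mul_assoc]
  -- entry formula for X = V*M*Vi
  have hX : ∀ i j, (V * M * Vi) i j = c * (d i)⁻¹ * d j * M i j := by
    intro i j
    have h1 := congrFun (congrFun hrelM i) j
    rw [hDdiag, hDidiag, Matrix.mul_diagonal, Matrix.diagonal_mul] at h1
    have hsmul : (c • M) i j = c * M i j := rfl
    rw [hsmul] at h1
    have h3 : d i * (V * M * Vi) i j = c * M i j * d j := by
      field_simp [hdne j] at h1
      linear_combination h1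
    field_simp [hdne i]
    linear_combination h3
  -- commutation of V, Vi with D entrywise
  have hDV : D * V = V * D := by
    rw [hD_def, hV_def]
    simp only [hconjmul]
    rw [hcomm.eq]
  have hDVi : D * Vi = Vi * D := by
    have hcomm' : sm * ui = ui * sm := (hcomm.units_inv_right).eq
    rw [hD_def, hVi_def]
    simp only [hconjmul]
    rw [hcomm']
  have hVd : ∀ i j, d i ≠ d j → V i j = 0 := by
    intro i j hij
    have h1 := congrFun (congrFun hDV i) j
    rw [hDdiag, Matrix.diagonal_mul, Matrix.mul_diagonal] at h1
    have h2 : (d i - d j) * V i j = 0 := by linear_combination h1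
    rcases mul_eq_zero.mp h2 with h | h
    · exact absurd (sub_eq_zero.mp h) hij
    · exact h
  have hVid : ∀ i j, d i ≠ d j → Vi i j = 0 := by
    intro i j hij
    have h1 := congrFun (congrFun hDVi i) j
    rw [hDdiag, Matrix.diagonal_mul, Matrix.mul_diagonal] at h1
    have h2 : (d i - d j) * Vi i j = 0 := by linear_combination h1
    rcases mul_eq_zero.mp h2 with h | h
    · exact absurd (sub_eq_zero.mp h) hij
    · exact h
  -- nilpotency of V - 1
  have hnilV : IsNilpotent (V - 1) := by
    have hVsub : V - 1 = Pi * (um - 1) * Pm := by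
      rw [hV_def, mul_sub, sub_mul, mul_one, hPiPm]
    obtain ⟨k, hk⟩ := huni
    refine ⟨k, ?_⟩
    have conjpow : ∀ (X : Matrix (Fin n) (Fin n) K) (k : ℕ), (Pi * X * Pm) ^ k = Pi * X ^ k * Pm := by
      intro X k
      induction k with
      | zero => simp [hPiPm]
      | succ k ih => rw [pow_succ, ih, hconjmul, ← pow_succ]
    rw [hVsub, conjpow, hk, mul_zero, zero_mul]
  -- the key vanishing statement
  have key : ∀ i j, d i ≠ c * d j → M i j = 0 := by
    intro i0 j0 hne
    set lam : K := c * d j0 * (d i0)⁻¹ with hlam_def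
    have hlam : lam ≠ 1 := by
      intro h1
      apply hne
      have h2 : lam * d i0 = d i0 := by rw [h1, one_mul]
      rw [hlam_def] at h2
      field_simp [hdne i0] at h2
      linear_combination -h2
    set W : Matrix (Fin n) (Fin n) K := Matrix.of (fun i j => if c * d j = lam * d i then M i j else 0) with hW_def
    have hWapp : ∀ i j, W i j = if c * d j = lam * d i then M i j else 0 := fun i j => rfl
    have hsum : ∀ i j, (V * W * Vi) i j
        = if c * d j = lam * d i then (V * M * Vi) i j else 0 := by
      intro i j
      by_cases hcond : c * d j = lam * d i
      · rw [if_pos hcond]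
        simp only [Matrix.mul_apply]
        apply Finset.sum_congr rfl
        intro l _
        by_cases hVil : Vi l j = 0
        · rw [hVil, mul_zero, mul_zero]
        · have hdl : d l = d j := by
            by_contra hdl'
            exact hVil (hVid l j hdl')
          congr 1
          apply Finset.sum_congr rfl
          intro k _
          by_cases hVik : V i k = 0
          · rw [hVik, zero_mul, zero_mul]
          · have hdk : d i = d k := by
              by_contra hdk'
              exact hVik (hVd i k hdk')
            congr 1
            rw [hWapp, if_pos]
            rw [hdl, ← hdk]
            exact hcond
      · rw [if_neg hcond]
        simp only [Matrix.mul_apply]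
        apply Finset.sum_eq_zero
        intro l _
        by_cases hVil : Vi l j = 0
        · rw [hVil, mul_zero]
        · have hdl : d l = d j := by
            by_contra hdl'
            exact hVil (hVid l j hdl')
          have hinner : (∑ k, V i k * W k l) = 0 := by
            apply Finset.sum_eq_zero
            intro k _
            by_cases hVik : V i k = 0
            · rw [hVik, zero_mul]
            · have hdk : d i = d k := by
                by_contra hdk'
                exact hVik (hVd i k hdk')
              rw [hWapp, if_neg, mul_zero]
              rw [hdl, ← hdk]
              exact hcond
          rw [hinner, zero_mul]
    have claim1 : V * W * Vi = lam • W := by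
      ext i j
      rw [hsum i j]
      have hsmul : (lam • W) i j = lam * W i j := rfl
      rw [hsmul, hWapp]
      by_cases hcond : c * d j = lam * d i
      · rw [if_pos hcond, if_pos hcond, hX]
        have h4 : c * (d i)⁻¹ * d j = lam := by
          have h5 : c * d j * (d i)⁻¹ = lam * d i * (d i)⁻¹ := by rw [hcond]
          rw [mul_assoc lam, mul_inv_cancel₀ (hdne i), mul_one] at h5
          rw [← h5]; ring
        rw [h4]
      · rw [if_neg hcond, if_neg hcond, mul_zero]
    have hVW : V * W = lam • (W * V) := by
      have h5 := congrArg (fun X => X * V) claim1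
      rw [mul_assoc, hViV, mul_one, smul_mul_assoc] at h5
      exact h5
    have heq : (1 - lam) • W = lam • (W * (V - 1)) - (V - 1) * W := by
      rw [mul_sub, sub_mul, mul_one, one_mul, smul_sub, hVW]
      module
    have hW0 : W = 0 := aux_twisted_nilp (V - 1) W hnilV lam hlam heq
    have h6 : W i0 j0 = 0 := by rw [hW0]; rfl
    rw [hWapp, if_pos] at h6
    · exact h6
    · rw [hlam_def]
      field_simp [hdne i0]
  -- conclude D M = c • (M D)
  have hDM : D * M = c • (M * D) := by
    ext i j
    rw [hDdiag, Matrix.diagonal_mul]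
    have hsmul : (c • (M * Matrix.diagonal d)) i j = c * (M * Matrix.diagonal d) i j := rfl
    rw [hsmul, Matrix.mul_diagonal]
    by_cases h : d i = c * d j
    · rw [h]; ring
    · rw [key i j h]; ring
  -- back to s : sm * N = c • (N * sm)
  have hsN : sm * N = c • (N * sm) := by
    apply hconj_inj
    have e1 : Pi * (sm * N) * Pm = D * M := by rw [hD_def, hM_def, hconjmul]
    have e2 : Pi * (N * sm) * Pm = M * D := by rw [hD_def, hM_def, hconjmul]
    rw [e1, hDM, ← e2, mul_smul_comm, smul_mul_assoc]
  constructor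
  · rw [mul_assoc, ← mul_assoc, hsN, smul_mul_assoc, mul_assoc, hsmsi, mul_one]
  · -- u part
    have h7 : N = c • (si * N * sm) := by
      calc N = si * (sm * N) := by rw [← mul_assoc, hsism, one_mul]
        _ = si * (c • (N * sm)) := by rw [hsN]
        _ = c • (si * N * sm) := by rw [mul_smul_comm, mul_assoc]
    have huNui : um * N * ui = N := by
      have h8 : um * N * ui = si * (sm * (um * N * ui) * si) * sm := by
        simp only [mul_assoc, hsism, mul_one]
        rw [← mul_assoc si sm, hsism, one_mul]
      rw [h8, harg, mul_smul_comm, smul_mul_assoc]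
      exact h7.symm
    have h9 := congrArg (fun X => X * um) huNui
    rw [mul_assoc (um * N) ui um, huium, mul_one] at h9
    exact h9
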